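/- arXiv:1407.3838 — 2 statements merged into one kernel-verified Lean document; each statement's English description precedes it below -/
import Mathlib

section
/- If 0 < L₁ < L₂ and, for i = 1, 2, cᵢ denotes the unique real solution of h(c − Lᵢ) = h(c) − Lᵢ·h′(c), then c₁ < c₂; that is, the function c(L) is strictly increasing on (0, ∞). -/
/-- The hill function `h(x) = arccos(tanh x)`. -/
noncomputable def hill (x : ℝ) : ℝ := Real.arccos (Real.tanh x)

/-- The derivative of the hill function: `h'(x) = -1/cosh x`. -/
noncomputable def hill' (x : ℝ) : ℝ := -1 / Real.cosh x

open Real in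
lemma tanh_hasDerivAt (x : ℝ) : HasDerivAt Real.tanh ((Real.cosh x ^ 2)⁻¹) x := by
  have h : HasDerivAt (fun y => Real.sinh y / Real.cosh y)
      ((Real.cosh x * Real.cosh x - Real.sinh x * Real.sinh x) / Real.cosh x ^ 2) x :=
    (Real.hasDerivAt_sinh x).div (Real.hasDerivAt_cosh x) (Real.cosh_pos x).ne'
  have e : Real.tanh = fun y => Real.sinh y / Real.cosh y := by
    funext y; exact Real.tanh_eq_sinh_div_cosh y
  rw [e]
  convert h using 1
  have h1 := Real.cosh_sq_sub_sinh_sq x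
  have h2 := (Real.cosh_pos x).ne'
  field_simp
  nlinarith

lemma abs_tanh_lt_one (x : ℝ) : |Real.tanh x| < 1 := by
  rw [Real.tanh_eq_sinh_div_cosh, abs_div, abs_of_pos (Real.cosh_pos x),
    div_lt_one (Real.cosh_pos x), Real.abs_sinh, ← Real.cosh_abs]
  nlinarith [Real.cosh_sq_sub_sinh_sq |x|, Real.cosh_pos |x|]

lemma one_sub_tanh_sq (x : ℝ) : 1 - Real.tanh x ^ 2 = (Real.cosh x ^ 2)⁻¹ := by
  rw [Real.tanh_eq_sinh_div_cosh]
  have h2 := (Real.cosh_pos x).ne'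
  field_simp
  linarith [Real.cosh_sq_sub_sinh_sq x]

lemma hill_hasDerivAt (x : ℝ) : HasDerivAt hill (hill' x) x := by
  have hb := abs_tanh_lt_one x
  rw [abs_lt] at hb
  have ha := Real.hasDerivAt_arccos (ne_of_gt hb.1) (ne_of_lt hb.2)
  have h := ha.comp x (tanh_hasDerivAt x)
  convert h using 1
  · rfl
  · rfl
  · rfl
  rw [one_sub_tanh_sq, Real.sqrt_inv, Real.sqrt_sq (Real.cosh_pos x).le]
  have h2 := (Real.cosh_pos x).ne'
  unfold hill'
  field_simp

lemma hill'_hasDerivAt (x : ℝ) :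
    HasDerivAt hill' (Real.sinh x / Real.cosh x ^ 2) x := by
  have h := ((Real.hasDerivAt_cosh x).inv (Real.cosh_pos x).ne').neg
  have e : hill' = fun y => -(Real.cosh y)⁻¹ := by
    funext y; unfold hill'; rw [neg_div, one_div]
  rw [e]
  convert h using 1
  · rfl
  · rfl
  · rfl
  rw [neg_div, neg_neg]

/-- Derivative in `t` of `t ↦ hill (c - t) - hill c + t * hill' c`. -/
lemma lam_hasDerivAt (c t : ℝ) :
    HasDerivAt (fun t => hill (c - t) - hill c + t * hill' c)
      (1 / Real.cosh (c - t) - 1 / Real.cosh c) t := by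
  have h1 : HasDerivAt (fun t : ℝ => c - t) (-1) t := by
    simpa using (hasDerivAt_id t).const_sub c
  have h2 := (hill_hasDerivAt (c - t)).comp t h1
  have h3 : HasDerivAt (fun t : ℝ => t * hill' c) (hill' c) t := by
    simpa using (hasDerivAt_id t).mul_const (hill' c)
  have h := (h2.sub_const (hill c)).add h3
  convert h using 1
  · rfl
  · rfl
  · rfl
  unfold hill'
  ring

/-- Derivative in `x` of `x ↦ hill (x - L) - hill x + L * hill' x`. -/
lemma mu_hasDerivAt (L x : ℝ) :
    HasDerivAt (fun x => hill (x - L) - hill x + L * hill' x)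
      (-1 / Real.cosh (x - L) + 1 / Real.cosh x + L * (Real.sinh x / Real.cosh x ^ 2)) x := by
  have h1 : HasDerivAt (fun x : ℝ => x - L) 1 x := by
    simpa using (hasDerivAt_id x).sub_const L
  have h2 := (hill_hasDerivAt (x - L)).comp x h1
  have h3 := (hill'_hasDerivAt x).const_mul L
  have h := (h2.sub (hill_hasDerivAt x)).add h3
  convert h using 1
  · rfl
  · rfl
  · rfl
  unfold hill'
  ring

lemma lam_continuous (c : ℝ) :
    Continuous (fun t => hill (c - t) - hill c + t * hill' c) := by
  have : Differentiable ℝ (fun t => hill (c - t) - hill c + t * hill' c) :=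
    fun t => (lam_hasDerivAt c t).differentiableAt
  exact this.continuous

lemma lam_zero (c : ℝ) : hill (c - 0) - hill c + 0 * hill' c = 0 := by ring_nf

/-- Any solution has `0 < c`. -/
lemma sol_pos {c L : ℝ} (hL : 0 < L)
    (hc : hill (c - L) = hill c - L * hill' c) : 0 < c := by
  by_contra hcn
  push_neg at hcn
  set f := fun t => hill (c - t) - hill c + t * hill' c with hf
  have hanti : StrictAntiOn f (Set.Ici (0 : ℝ)) := by
    apply strictAntiOn_of_deriv_neg (convex_Ici 0) (lam_continuous c).continuousOn
    intro t ht
    rw [interior_Ici, Set.mem_Ioi] at ht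
    rw [(lam_hasDerivAt c t).deriv]
    have hlt : Real.cosh c < Real.cosh (c - t) := by
      rw [Real.cosh_lt_cosh]
      rw [abs_of_nonpos hcn, abs_of_nonpos (by linarith)]
      linarith
    have := Real.cosh_pos c
    have := Real.cosh_pos (c - t)
    have : 1 / Real.cosh (c - t) < 1 / Real.cosh c :=
      one_div_lt_one_div_of_lt (Real.cosh_pos c) hlt
    linarith
  have h0 : f L < f 0 := hanti Set.self_mem_Ici (Set.mem_Ici.2 hL.le) hL
  rw [hf] at h0
  simp only [lam_zero] at h0
  have : f L = 0 := by simp only [hf]; linarith [hc]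
  rw [hf] at this
  linarith

/-- Any solution has `2 * c < L`. -/
lemma sol_lt {c L : ℝ} (hL : 0 < L) (hcpos : 0 < c)
    (hc : hill (c - L) = hill c - L * hill' c) : 2 * c < L := by
  by_contra hLn
  push_neg at hLn
  set f := fun t => hill (c - t) - hill c + t * hill' c with hf
  have hmono : StrictMonoOn f (Set.Icc (0 : ℝ) (2 * c)) := by
    apply strictMonoOn_of_deriv_pos (convex_Icc 0 (2 * c)) (lam_continuous c).continuousOn
    intro t ht
    rw [interior_Icc, Set.mem_Ioo] at ht
    rw [(lam_hasDerivAt c t).deriv]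
    have hlt : Real.cosh (c - t) < Real.cosh c := by
      rw [Real.cosh_lt_cosh, abs_of_pos hcpos, abs_lt]
      constructor <;> linarith [ht.1, ht.2]
    have : 1 / Real.cosh c < 1 / Real.cosh (c - t) :=
      one_div_lt_one_div_of_lt (Real.cosh_pos (c - t)) hlt
    linarith
  have h0 : f 0 < f L :=
    hmono (Set.mem_Icc.2 ⟨le_refl 0, by linarith⟩) (Set.mem_Icc.2 ⟨hL.le, hLn⟩) hL
  rw [hf] at h0
  simp only [lam_zero] at h0
  have : f L = 0 := by simp only [hf]; linarith [hc]
  rw [hf] at this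
  linarith

/-- For `c > 0`, `t ↦ hill (c - t) - hill c + t * hill' c` is strictly
decreasing on `[2c, ∞)`. -/
lemma branch_anti {c : ℝ} (hcpos : 0 < c) :
    StrictAntiOn (fun t => hill (c - t) - hill c + t * hill' c) (Set.Ici (2 * c)) := by
  apply strictAntiOn_of_deriv_neg (convex_Ici (2 * c)) (lam_continuous c).continuousOn
  intro t ht
  rw [interior_Ici, Set.mem_Ioi] at ht
  rw [(lam_hasDerivAt c t).deriv]
  have hlt : Real.cosh c < Real.cosh (c - t) := by
    rw [Real.cosh_lt_cosh, abs_of_pos hcpos, abs_of_nonpos (by linarith : c - t ≤ 0)]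
    linarith
  have : 1 / Real.cosh (c - t) < 1 / Real.cosh c :=
    one_div_lt_one_div_of_lt (Real.cosh_pos c) hlt
  linarith

/-- If `0 < L₁ < L₂` and `cᵢ` solves `h (c - Lᵢ) = h c - Lᵢ * h' c`, then `c₁ < c₂`:
the function `c(L)` is strictly increasing on `(0, ∞)`. -/
theorem hill_c_strictMono {L₁ L₂ c₁ c₂ : ℝ}
    (hL₁ : 0 < L₁) (hL₁₂ : L₁ < L₂)
    (hc₁ : hill (c₁ - L₁) = hill c₁ - L₁ * hill' c₁)
    (hc₂ : hill (c₂ - L₂) = hill c₂ - L₂ * hill' c₂) :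
    c₁ < c₂ := by
  have hL₂ : 0 < L₂ := lt_trans hL₁ hL₁₂
  have hc₁pos : 0 < c₁ := sol_pos hL₁ hc₁
  have hc₂pos : 0 < c₂ := sol_pos hL₂ hc₂
  have h2c₁ : 2 * c₁ < L₁ := sol_lt hL₁ hc₁pos hc₁
  by_contra hcn
  push_neg at hcn
  -- hcn : c₂ ≤ c₁
  -- Step 1: G(c₁, L₂) < 0
  have hG1 : hill (c₁ - L₂) - hill c₁ + L₂ * hill' c₁ < 0 := by
    have h := branch_anti hc₁pos (Set.mem_Ici.2 h2c₁.le)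
      (Set.mem_Ici.2 (by linarith : 2 * c₁ ≤ L₂)) hL₁₂
    have hz : hill (c₁ - L₁) - hill c₁ + L₁ * hill' c₁ = 0 := by linarith [hc₁]
    simpa [hz] using h
  -- Step 2: equality or strict increase in c
  rcases eq_or_lt_of_le hcn with heq | hlt
  · -- c₂ = c₁
    rw [heq] at hc₂
    have : hill (c₁ - L₂) - hill c₁ + L₂ * hill' c₁ = 0 := by linarith [hc₂]
    linarith
  · -- c₂ < c₁ : G(·, L₂) strictly increasing on [c₂, c₁]
    set g := fun x => hill (x - L₂) - hill x + L₂ * hill' x with hg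
    have hmono : StrictMonoOn g (Set.Icc c₂ c₁) := by
      apply strictMonoOn_of_deriv_pos (convex_Icc c₂ c₁)
      · have : Differentiable ℝ g := fun x => (mu_hasDerivAt L₂ x).differentiableAt
        exact this.continuous.continuousOn
      · intro x hx
        rw [interior_Icc, Set.mem_Ioo] at hx
        rw [(mu_hasDerivAt L₂ x).deriv]
        have hxpos : 0 < x := lt_trans hc₂pos hx.1
        have hxL : 2 * x < L₂ := by linarith [hx.2]
        have hle : Real.cosh x ≤ Real.cosh (x - L₂) := by
          rw [Real.cosh_le_cosh, abs_of_pos hxpos,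
            abs_of_nonpos (by linarith : x - L₂ ≤ 0)]
          linarith
        have h1 : -1 / Real.cosh (x - L₂) + 1 / Real.cosh x ≥ 0 := by
          have := one_div_le_one_div_of_le (Real.cosh_pos x) hle
          have := Real.cosh_pos (x - L₂)
          rw [neg_div]
          linarith
        have h2 : 0 < L₂ * (Real.sinh x / Real.cosh x ^ 2) := by
          apply mul_pos hL₂
          apply div_pos (Real.sinh_pos_iff.2 hxpos)
          positivity
        linarith
    have h0 : g c₂ < g c₁ :=
      hmono (Set.mem_Icc.2 ⟨le_refl c₂, hlt.le⟩) (Set.mem_Icc.2 ⟨hlt.le, le_refl c₁⟩) hlt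
    have hz2 : g c₂ = 0 := by simp only [hg]; linarith [hc₂]
    have : g c₁ = hill (c₁ - L₂) - hill c₁ + L₂ * hill' c₁ := rfl
    linarith
end

section
/- Let c be the unique real solution of h(c − 1) = h(c) − h′(c). Then 0.947 < h(c − 1) − h(c) < 0.949; that is, G(1) ≈ 0.948. -/
open Real Finset

/-! ### Auxiliary Taylor-type bounds -/

private lemma aux_nonneg {f f' : ℝ → ℝ} (hd : ∀ x, HasDerivAt f (f' x) x) (h0 : 0 ≤ f 0)
    (hf' : ∀ x, 0 ≤ x → 0 ≤ f' x) : ∀ x, 0 ≤ x → 0 ≤ f x := by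
  intro x hx
  have hm : MonotoneOn f (Set.Ici 0) := by
    apply monotoneOn_of_deriv_nonneg (convex_Ici 0)
      ((continuous_iff_continuousAt.2 fun y => (hd y).continuousAt).continuousOn)
    · intro y hy
      exact (hd y).differentiableAt.differentiableWithinAt
    · intro y hy
      rw [interior_Ici] at hy
      rw [(hd y).deriv]
      exact hf' y (le_of_lt hy)
  calc (0:ℝ) ≤ f 0 := h0
    _ ≤ f x := hm (by simp) (by simpa using hx) hx

private lemma sin_ge_T3 {x : ℝ} (hx : 0 ≤ x) : x - x ^ 3 / 6 ≤ sin x := by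
  have := aux_nonneg (f := fun x => sin x - (x - x ^ 3 / 6))
    (f' := fun x => cos x - (1 - x ^ 2 / 2))
    (fun y => by
      exact ((hasDerivAt_sin y).sub (((hasDerivAt_id y).sub
        (((hasDerivAt_pow 3 y).div_const 6))))) |>.congr_deriv (by ring))
    (by simp) (fun y _ => sub_nonneg.2 (one_sub_sq_div_two_le_cos)) x hx
  linarith

private lemma cos_le_T4 {x : ℝ} (hx : 0 ≤ x) : cos x ≤ 1 - x ^ 2 / 2 + x ^ 4 / 24 := by
  have := aux_nonneg (f := fun x => 1 - x ^ 2 / 2 + x ^ 4 / 24 - cos x)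
    (f' := fun x => sin x - (x - x ^ 3 / 6))
    (fun y => by
      have h : HasDerivAt (fun x : ℝ => 1 - x ^ 2 / 2 + x ^ 4 / 24 - cos x)
          (-(2 * y) / 2 + 4 * y ^ 3 / 24 - (-sin y)) y := by
        exact ((((hasDerivAt_const y (1:ℝ)).sub ((hasDerivAt_pow 2 y).div_const 2)).add
          ((hasDerivAt_pow 4 y).div_const 24)).sub (hasDerivAt_cos y)).congr_deriv (by ring)
      exact h.congr_deriv (by ring))
    (by simp) (fun y hy => sub_nonneg.2 (sin_ge_T3 hy)) x hx
  linarith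

private lemma sin_le_T5 {x : ℝ} (hx : 0 ≤ x) : sin x ≤ x - x ^ 3 / 6 + x ^ 5 / 120 := by
  have := aux_nonneg (f := fun x => x - x ^ 3 / 6 + x ^ 5 / 120 - sin x)
    (f' := fun x => (1 - x ^ 2 / 2 + x ^ 4 / 24) - cos x)
    (fun y => by
      have h : HasDerivAt (fun x : ℝ => x - x ^ 3 / 6 + x ^ 5 / 120 - sin x)
          (1 - 3 * y ^ 2 / 6 + 5 * y ^ 4 / 120 - cos y) y := by
        exact (((hasDerivAt_id y).sub ((hasDerivAt_pow 3 y).div_const 6)).add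
          ((hasDerivAt_pow 5 y).div_const 120)).sub (hasDerivAt_sin y) |>.congr_deriv (by ring)
      exact h.congr_deriv (by ring))
    (by simp) (fun y hy => sub_nonneg.2 (cos_le_T4 hy)) x hx
  linarith

private lemma cos_ge_T6 {x : ℝ} (hx : 0 ≤ x) :
    1 - x ^ 2 / 2 + x ^ 4 / 24 - x ^ 6 / 720 ≤ cos x := by
  have := aux_nonneg (f := fun x => cos x - (1 - x ^ 2 / 2 + x ^ 4 / 24 - x ^ 6 / 720))
    (f' := fun x => (x - x ^ 3 / 6 + x ^ 5 / 120) - sin x)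
    (fun y => by
      have h : HasDerivAt (fun x : ℝ => cos x - (1 - x ^ 2 / 2 + x ^ 4 / 24 - x ^ 6 / 720))
          (-sin y - (-(2 * y) / 2 + 4 * y ^ 3 / 24 - 6 * y ^ 5 / 720)) y := by
        exact (hasDerivAt_cos y).sub ((((hasDerivAt_const y (1:ℝ)).sub
          ((hasDerivAt_pow 2 y).div_const 2)).add ((hasDerivAt_pow 4 y).div_const 24)).sub
          ((hasDerivAt_pow 6 y).div_const 720)) |>.congr_deriv (by ring)
      exact h.congr_deriv (by ring))
    (by simp) (fun y hy => sub_nonneg.2 (sin_le_T5 hy)) x hx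
  linarith

private lemma sin_ge_T7 {x : ℝ} (hx : 0 ≤ x) :
    x - x ^ 3 / 6 + x ^ 5 / 120 - x ^ 7 / 5040 ≤ sin x := by
  have := aux_nonneg (f := fun x => sin x - (x - x ^ 3 / 6 + x ^ 5 / 120 - x ^ 7 / 5040))
    (f' := fun x => cos x - (1 - x ^ 2 / 2 + x ^ 4 / 24 - x ^ 6 / 720))
    (fun y => by
      have h : HasDerivAt (fun x : ℝ => sin x - (x - x ^ 3 / 6 + x ^ 5 / 120 - x ^ 7 / 5040))
          (cos y - (1 - 3 * y ^ 2 / 6 + 5 * y ^ 4 / 120 - 7 * y ^ 6 / 5040)) y := by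
        exact (hasDerivAt_sin y).sub ((((hasDerivAt_id y).sub
          ((hasDerivAt_pow 3 y).div_const 6)).add ((hasDerivAt_pow 5 y).div_const 120)).sub
          ((hasDerivAt_pow 7 y).div_const 5040)) |>.congr_deriv (by ring)
      exact h.congr_deriv (by ring))
    (by simp) (fun y hy => sub_nonneg.2 (cos_ge_T6 hy)) x hx
  linarith

private lemma cos_le_T8 {x : ℝ} (hx : 0 ≤ x) :
    cos x ≤ 1 - x ^ 2 / 2 + x ^ 4 / 24 - x ^ 6 / 720 + x ^ 8 / 40320 := by
  have := aux_nonneg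
    (f := fun x => 1 - x ^ 2 / 2 + x ^ 4 / 24 - x ^ 6 / 720 + x ^ 8 / 40320 - cos x)
    (f' := fun x => sin x - (x - x ^ 3 / 6 + x ^ 5 / 120 - x ^ 7 / 5040))
    (fun y => by
      have h : HasDerivAt
          (fun x : ℝ => 1 - x ^ 2 / 2 + x ^ 4 / 24 - x ^ 6 / 720 + x ^ 8 / 40320 - cos x)
          (-(2 * y) / 2 + 4 * y ^ 3 / 24 - 6 * y ^ 5 / 720 + 8 * y ^ 7 / 40320 - (-sin y)) y := by
        exact (((((hasDerivAt_const y (1:ℝ)).sub ((hasDerivAt_pow 2 y).div_const 2)).add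
          ((hasDerivAt_pow 4 y).div_const 24)).sub ((hasDerivAt_pow 6 y).div_const 720)).add
          ((hasDerivAt_pow 8 y).div_const 40320)).sub (hasDerivAt_cos y) |>.congr_deriv (by ring)
      exact h.congr_deriv (by ring))
    (by simp) (fun y hy => sub_nonneg.2 (sin_ge_T7 hy)) x hx
  linarith

/-! ### Exponential bounds -/

private lemma exp_bound_rat {x : ℝ} (hx1 : 0 ≤ x) (hx2 : x ≤ 1) :
    |exp x - (1 + x + x^2/2 + x^3/6 + x^4/24 + x^5/120 + x^6/720 + x^7/5040)|
      ≤ x ^ 8 * (9 / 322560) := by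
  have h := Real.exp_bound (x := x) (by rw [abs_of_nonneg hx1]; exact hx2) (n := 8) (by norm_num)
  have hs : ∑ i ∈ range 8, x ^ i / (Nat.factorial i : ℝ)
      = 1 + x + x^2/2 + x^3/6 + x^4/24 + x^5/120 + x^6/720 + x^7/5040 := by
    norm_num [Finset.sum_range_succ, Nat.factorial]
    try ring
  rw [hs] at h
  calc |exp x - _| ≤ |x| ^ 8 * ((8:ℕ).succ / ((Nat.factorial 8 : ℝ) * 8)) := h
    _ = x ^ 8 * (9 / 322560) := by
        rw [abs_of_nonneg hx1]; norm_num [Nat.factorial]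

private lemma exp_327 : 1.3868014 < exp 0.327 ∧ exp 0.327 < 1.3868016 := by
  have h := exp_bound_rat (x := 0.327) (by norm_num) (by norm_num)
  rw [abs_le] at h
  constructor <;> [nlinarith [h.1]; nlinarith [h.2]]

private lemma exp_673 : 1.9601065 < exp 0.673 ∧ exp 0.673 < 1.9601089 := by
  have h := exp_bound_rat (x := 0.673) (by norm_num) (by norm_num)
  rw [abs_le] at h
  constructor <;> [nlinarith [h.1]; nlinarith [h.2]]

private lemma exp_33 : 1.3909681 < exp 0.33 ∧ exp 0.33 < 1.3909682 := by
  have h := exp_bound_rat (x := 0.33) (by norm_num) (by norm_num)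
  rw [abs_le] at h
  constructor <;> [nlinarith [h.1]; nlinarith [h.2]]

private lemma exp_67 : 1.9542351 < exp 0.67 ∧ exp 0.67 < 1.9542374 := by
  have h := exp_bound_rat (x := 0.67) (by norm_num) (by norm_num)
  rw [abs_le] at h
  constructor <;> [nlinarith [h.1]; nlinarith [h.2]]

/-! ### tanh and sech in terms of exp -/

private lemma tanh_eq_exp (x : ℝ) :
    Real.tanh x = (exp x ^ 2 - 1) / (exp x ^ 2 + 1) := by
  rw [Real.tanh_eq_sinh_div_cosh, Real.sinh_eq, Real.cosh_eq, Real.exp_neg]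
  have h := (Real.exp_pos x).ne'
  field_simp

private lemma inv_cosh_eq_exp (x : ℝ) :
    1 / Real.cosh x = 2 * exp x / (exp x ^ 2 + 1) := by
  rw [Real.cosh_eq, Real.exp_neg]
  have h := (Real.exp_pos x).ne'
  field_simp

private lemma tanh_lt_one' (x : ℝ) : Real.tanh x < 1 := by
  rw [tanh_eq_exp]
  have h := Real.exp_pos x
  rw [div_lt_one (by positivity)]
  linarith

private lemma neg_one_lt_tanh' (x : ℝ) : -1 < Real.tanh x := by
  rw [tanh_eq_exp]
  have h := Real.exp_pos x
  rw [lt_div_iff₀ (by positivity)]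
  nlinarith

private lemma sqrt_one_sub_tanh_sq (x : ℝ) :
    Real.sqrt (1 - Real.tanh x ^ 2) = 1 / Real.cosh x := by
  have hc := (Real.cosh_pos x).ne'
  have h : 1 - Real.tanh x ^ 2 = (1 / Real.cosh x) ^ 2 := by
    rw [Real.tanh_eq_sinh_div_cosh]
    field_simp
    linarith [Real.cosh_sq_sub_sinh_sq x]
  rw [h, Real.sqrt_sq (by positivity)]

/-! ### Derivative of hill -/

private lemma hasDerivAt_tanh' (x : ℝ) :
    HasDerivAt Real.tanh (1 / Real.cosh x ^ 2) x := by
  have h : HasDerivAt (fun y => Real.sinh y / Real.cosh y)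
      ((Real.cosh x * Real.cosh x - Real.sinh x * Real.sinh x) / Real.cosh x ^ 2) x :=
    (Real.hasDerivAt_sinh x).div (Real.hasDerivAt_cosh x) (Real.cosh_pos x).ne'
  have h2 : (Real.cosh x * Real.cosh x - Real.sinh x * Real.sinh x) / Real.cosh x ^ 2
      = 1 / Real.cosh x ^ 2 := by
    rw [show Real.cosh x * Real.cosh x - Real.sinh x * Real.sinh x = 1 by
      nlinarith [Real.cosh_sq_sub_sinh_sq x]]
  rw [h2] at h
  exact h.congr_of_eventuallyEq (Filter.Eventually.of_forall fun y =>
    (Real.tanh_eq_sinh_div_cosh y))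

private lemma hasDerivAt_hill (x : ℝ) : HasDerivAt hill (-(1 / Real.cosh x)) x := by
  have h1 : HasDerivAt Real.arccos (-(1 / Real.sqrt (1 - Real.tanh x ^ 2))) (Real.tanh x) :=
    Real.hasDerivAt_arccos (by linarith [neg_one_lt_tanh' x]) (by linarith [tanh_lt_one' x])
  have h := h1.comp x (hasDerivAt_tanh' x)
  have hc := (Real.cosh_pos x).ne'
  have h2 : -(1 / Real.sqrt (1 - Real.tanh x ^ 2)) * (1 / Real.cosh x ^ 2)
      = -(1 / Real.cosh x) := by
    rw [sqrt_one_sub_tanh_sq]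
    field_simp
  rw [h2] at h
  exact h

private lemma hasDerivAt_F (x : ℝ) :
    HasDerivAt (fun c => hill (c - 1) - hill c - 1 / Real.cosh c)
      (-(1 / Real.cosh (x - 1)) + 1 / Real.cosh x + Real.sinh x / Real.cosh x ^ 2) x := by
  have h1 : HasDerivAt (fun c : ℝ => hill (c - 1)) (-(1 / Real.cosh (x - 1)) * 1) x :=
    by have := (hasDerivAt_hill (x - 1)).comp x ((hasDerivAt_id x).sub_const 1); exact this
  have h3 : HasDerivAt (fun c : ℝ => 1 / Real.cosh c)
      ((0 * Real.cosh x - 1 * Real.sinh x) / Real.cosh x ^ 2) x :=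
    (hasDerivAt_const x (1:ℝ)).div (Real.hasDerivAt_cosh x) (Real.cosh_pos x).ne'
  exact ((h1.sub (hasDerivAt_hill x)).sub h3).congr_deriv (by ring)

/-! ### Strict monotonicity of F on [0, 1/2] -/

private lemma F_strictMonoOn :
    StrictMonoOn (fun c => hill (c - 1) - hill c - 1 / Real.cosh c) (Set.Icc 0 (1/2)) := by
  apply strictMonoOn_of_deriv_pos (convex_Icc 0 (1/2))
  · exact (continuous_iff_continuousAt.2 fun y => (hasDerivAt_F y).continuousAt).continuousOn
  · intro x hx
    rw [interior_Icc] at hx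
    rw [(hasDerivAt_F x).deriv]
    have h1 : 1 / Real.cosh (x - 1) ≤ 1 / Real.cosh x := by
      apply one_div_le_one_div_of_le (Real.cosh_pos x)
      apply Real.cosh_le_cosh.2
      rw [abs_of_pos hx.1, abs_of_neg (by linarith [hx.2] : x - 1 < 0)]
      linarith [hx.2]
    have h2 : 0 < Real.sinh x := Real.sinh_pos_iff.2 hx.1
    have h3 : 0 < Real.cosh x ^ 2 := by positivity
    have h4 : 0 < Real.sinh x / Real.cosh x ^ 2 := by positivity
    linarith

/-! ### Numerical bounds at the bracketing points -/

private lemma sech_327_bounds :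
    0.9488182 < 1 / Real.cosh 0.327 ∧ 1 / Real.cosh 0.327 < 0.9488183 := by
  have h := exp_327
  rw [inv_cosh_eq_exp]
  constructor
  · rw [lt_div_iff₀ (by positivity)]
    nlinarith [h.1, h.2, Real.exp_pos (0.327:ℝ)]
  · rw [div_lt_iff₀ (by positivity)]
    nlinarith [h.1, h.2, Real.exp_pos (0.327:ℝ)]

private lemma sech_33_bounds :
    0.9479158 < 1 / Real.cosh 0.33 ∧ 1 / Real.cosh 0.33 < 0.9479159 := by
  have h := exp_33
  rw [inv_cosh_eq_exp]
  constructor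
  · rw [lt_div_iff₀ (by positivity)]
    nlinarith [h.1, h.2, Real.exp_pos (0.33:ℝ)]
  · rw [div_lt_iff₀ (by positivity)]
    nlinarith [h.1, h.2, Real.exp_pos (0.33:ℝ)]

private lemma tanh_327_bounds :
    0 < Real.tanh 0.327 ∧ Real.tanh 0.327 < 0.3158227 := by
  have h := exp_327
  rw [tanh_eq_exp]
  constructor
  · apply div_pos _ (by positivity)
    nlinarith [h.1]
  · rw [div_lt_iff₀ (by positivity)]
    nlinarith [h.1, h.2, Real.exp_pos (0.327:ℝ)]

private lemma tanh_33_bounds :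
    0 < Real.tanh 0.33 ∧ 0.3185207 < Real.tanh 0.33 := by
  have h := exp_33
  rw [tanh_eq_exp]
  constructor
  · apply div_pos _ (by positivity)
    nlinarith [h.1]
  · rw [lt_div_iff₀ (by positivity)]
    nlinarith [h.1, h.2, Real.exp_pos (0.33:ℝ)]

private lemma tanh_673_ub : Real.tanh 0.673 < 0.5869499 := by
  have h := exp_673
  rw [tanh_eq_exp, div_lt_iff₀ (by positivity)]
  nlinarith [h.1, h.2, Real.exp_pos (0.673:ℝ)]

private lemma tanh_67_lb : 0.5849791 < Real.tanh 0.67 := by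
  have h := exp_67
  rw [tanh_eq_exp, lt_div_iff₀ (by positivity)]
  nlinarith [h.1, h.2, Real.exp_pos (0.67:ℝ)]

/-! ### Sign of F at the bracketing points -/

private lemma F_a_neg :
    hill ((0.327 : ℝ) - 1) - hill 0.327 - 1 / Real.cosh 0.327 < 0 := by
  have hpi := Real.pi_gt_three
  have ha : (0.327 : ℝ) - 1 = -(0.673 : ℝ) := by norm_num
  set D := 1 / Real.cosh (0.327 : ℝ) with hD
  obtain ⟨hd1, hd2⟩ := sech_327_bounds
  obtain ⟨ht0, ht2⟩ := tanh_327_bounds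
  have hu := tanh_673_ub
  -- trig bounds at D
  have hcos1 : Real.cos D < Real.cos 0.9488182 :=
    Real.cos_lt_cos_of_nonneg_of_le_pi (by norm_num) (by linarith) hd1
  have hcos2 := cos_le_T8 (x := 0.9488182) (by norm_num)
  have hsin1 : Real.sin 0.9488182 < Real.sin D :=
    Real.sin_lt_sin_of_lt_of_le_pi_div_two (by norm_num; linarith) (by linarith) hd1
  have hsin2 := sin_ge_T7 (x := 0.9488182) (by norm_num)
  have hcosD_nonneg : 0 ≤ Real.cos D :=
    Real.cos_nonneg_of_mem_Icc ⟨by linarith, by linarith⟩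
  -- reduce to a cosine inequality
  suffices hkey : Real.arccos (Real.tanh ((0.327:ℝ) - 1))
      < Real.arccos (Real.tanh 0.327) + D by
    simp only [hill]
    linarith
  by_contra hcon
  push_neg at hcon
  have hBD0 : 0 ≤ Real.arccos (Real.tanh 0.327) + D :=
    add_nonneg (Real.arccos_nonneg _) (by linarith)
  have h5 : Real.cos (Real.arccos (Real.tanh ((0.327:ℝ) - 1)))
      ≤ Real.cos (Real.arccos (Real.tanh 0.327) + D) :=
    Real.cos_le_cos_of_nonneg_of_le_pi hBD0 (Real.arccos_le_pi _) hcon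
  rw [Real.cos_arccos (neg_one_lt_tanh' _).le (tanh_lt_one' _).le, Real.cos_add,
    Real.cos_arccos (neg_one_lt_tanh' _).le (tanh_lt_one' _).le,
    Real.sin_arccos, sqrt_one_sub_tanh_sq, ← hD, ha, Real.tanh_neg] at h5
  -- numeric contradiction
  have hm1 : Real.tanh 0.327 * Real.cos D
      ≤ 0.3158227 * (1 - 0.9488182^2/2 + 0.9488182^4/24 - 0.9488182^6/720
          + 0.9488182^8/40320 : ℝ) :=
    mul_le_mul ht2.le (hcos1.le.trans hcos2) hcosD_nonneg (by norm_num)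
  have hm2 : (0.9488182 : ℝ) * (0.9488182 - 0.9488182^3/6 + 0.9488182^5/120
      - 0.9488182^7/5040 : ℝ) ≤ D * Real.sin D :=
    mul_le_mul hd1.le (hsin2.trans hsin1.le) (by norm_num) (by linarith)
  have hnum : (0.3158227 : ℝ) * (1 - 0.9488182^2/2 + 0.9488182^4/24 - 0.9488182^6/720
      + 0.9488182^8/40320) - 0.9488182 * (0.9488182 - 0.9488182^3/6 + 0.9488182^5/120
      - 0.9488182^7/5040) < -0.5869499 := by norm_num
  linarith

private lemma F_b_pos :
    0 < hill ((0.33 : ℝ) - 1) - hill 0.33 - 1 / Real.cosh 0.33 := by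
  have hpi := Real.pi_gt_three
  have ha : (0.33 : ℝ) - 1 = -(0.67 : ℝ) := by norm_num
  set D := 1 / Real.cosh (0.33 : ℝ) with hD
  obtain ⟨hd1, hd2⟩ := sech_33_bounds
  obtain ⟨ht0, ht1⟩ := tanh_33_bounds
  have hu := tanh_67_lb
  have hcos1 : Real.cos 0.9479159 < Real.cos D :=
    Real.cos_lt_cos_of_nonneg_of_le_pi (by linarith) (by linarith) hd2
  have hcos2 := cos_ge_T6 (x := 0.9479159) (by norm_num)
  have hsin1 : Real.sin D < Real.sin 0.9479159 :=
    Real.sin_lt_sin_of_lt_of_le_pi_div_two (by linarith) (by linarith) hd2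
  have hsin2 := sin_le_T5 (x := 0.9479159) (by norm_num)
  have hsinD_nonneg : 0 ≤ Real.sin D :=
    Real.sin_nonneg_of_nonneg_of_le_pi (by linarith) (by linarith)
  suffices hkey : Real.arccos (Real.tanh 0.33) + D
      < Real.arccos (Real.tanh ((0.33:ℝ) - 1)) by
    simp only [hill]
    linarith
  by_contra hcon
  push_neg at hcon
  have hB : Real.arccos (Real.tanh 0.33) ≤ π / 2 := Real.arccos_le_pi_div_two.2 ht0.le
  have hBDpi : Real.arccos (Real.tanh 0.33) + D ≤ π := by linarith
  have h5 : Real.cos (Real.arccos (Real.tanh 0.33) + D)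
      ≤ Real.cos (Real.arccos (Real.tanh ((0.33:ℝ) - 1))) :=
    Real.cos_le_cos_of_nonneg_of_le_pi (Real.arccos_nonneg _) hBDpi hcon
  rw [Real.cos_arccos (neg_one_lt_tanh' _).le (tanh_lt_one' _).le, Real.cos_add,
    Real.cos_arccos (neg_one_lt_tanh' _).le (tanh_lt_one' _).le,
    Real.sin_arccos, sqrt_one_sub_tanh_sq, ← hD, ha, Real.tanh_neg] at h5
  have hm1 : (0.3185207 : ℝ) * (1 - 0.9479159^2/2 + 0.9479159^4/24 - 0.9479159^6/720 : ℝ)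
      ≤ Real.tanh 0.33 * Real.cos D :=
    mul_le_mul ht1.le (hcos2.trans hcos1.le) (by norm_num) ht0.le
  have hm2 : D * Real.sin D ≤ (0.9479159 : ℝ) * (0.9479159 - 0.9479159^3/6
      + 0.9479159^5/120 : ℝ) :=
    mul_le_mul hd2.le (hsin1.le.trans hsin2) hsinD_nonneg (by norm_num)
  have hnum : (-0.5849791 : ℝ) < (0.3185207 : ℝ) * (1 - 0.9479159^2/2 + 0.9479159^4/24
      - 0.9479159^6/720) - 0.9479159 * (0.9479159 - 0.9479159^3/6 + 0.9479159^5/120) := by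
    norm_num
  linarith

/-- If `c` solves `h (c - 1) = h c - h' c`, then `0.947 < h (c - 1) - h c < 0.949`;
that is, `G(1) ≈ 0.948`. -/
theorem hill_G_one_approx {c : ℝ}
    (hc : hill (c - 1) = hill c - 1 * hill' c) :
    0.947 < hill (c - 1) - hill c ∧ hill (c - 1) - hill c < 0.949 := by
  have hrel : hill (c - 1) - hill c = 1 / Real.cosh c := by
    rw [hc]; simp only [hill']; ring
  -- Mean value theorem: locate c in (0, 1/2)
  obtain ⟨ξ, hξmem, hξ⟩ := exists_hasDerivAt_eq_slope hill (fun x => -(1 / Real.cosh x))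
    (show c - 1 < c by linarith)
    ((continuous_iff_continuousAt.2 fun y => (hasDerivAt_hill y).continuousAt).continuousOn)
    (fun x _ => hasDerivAt_hill x)
  have hden : c - (c - 1) = 1 := by ring
  rw [hden, div_one] at hξ
  have h1 : 1 / Real.cosh ξ = 1 / Real.cosh c := by
    have := hrel
    linarith
  have hcosh : Real.cosh ξ = Real.cosh c := by
    have h2 := (Real.cosh_pos ξ).ne'
    have h3 := (Real.cosh_pos c).ne'
    field_simp at h1
    linarith
  have habs : |ξ| = |c| :=
    le_antisymm (Real.cosh_le_cosh.1 hcosh.le) (Real.cosh_le_cosh.1 hcosh.ge)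
  have hc0 : 0 < c := by
    by_contra h
    push_neg at h
    have hξneg : ξ < 0 := lt_of_lt_of_le hξmem.2 h
    rw [abs_of_neg hξneg, abs_of_nonpos h] at habs
    have := hξmem.2
    linarith
  have hc12 : c < 1/2 := by
    by_contra h
    push_neg at h
    have hlt : |ξ| < |c| := by
      rw [abs_of_pos hc0]
      exact abs_lt.2 ⟨by linarith [hξmem.1], hξmem.2⟩
    rw [habs] at hlt
    exact lt_irrefl _ hlt
  -- localize c between 0.327 and 0.33 by monotonicity
  have hmem : c ∈ Set.Icc (0:ℝ) (1/2) := ⟨hc0.le, hc12.le⟩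
  have hFc : hill (c - 1) - hill c - 1 / Real.cosh c = 0 := by linarith
  have ha_lt : (0.327 : ℝ) < c := by
    by_contra h
    push_neg at h
    have := F_strictMonoOn.monotoneOn hmem (by norm_num) h
    linarith [F_a_neg]
  have hb_gt : c < 0.33 := by
    by_contra h
    push_neg at h
    have := F_strictMonoOn.monotoneOn (by norm_num) hmem h
    linarith [F_b_pos]
  -- conclude
  have hupper : 1 / Real.cosh c < 1 / Real.cosh 0.327 := by
    apply one_div_lt_one_div_of_lt (Real.cosh_pos _)
    apply Real.cosh_lt_cosh.2
    rw [abs_of_pos hc0, abs_of_pos (by norm_num : (0:ℝ) < 0.327)]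
    exact ha_lt
  have hlower : 1 / Real.cosh 0.33 < 1 / Real.cosh c := by
    apply one_div_lt_one_div_of_lt (Real.cosh_pos _)
    apply Real.cosh_lt_cosh.2
    rw [abs_of_pos hc0, abs_of_pos (by norm_num : (0:ℝ) < 0.33)]
    exact hb_gt
  constructor
  · rw [hrel]
    linarith [sech_33_bounds.1]
  · rw [hrel]
    linarith [sech_327_bounds.2]
end
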